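/- (Finite-dimensional extended formulation for bounded variation.) Let N ∈ ℕ and σ ∈ ℕ be even. Let U(σ)_N ⊆ {0,1}^N be the set of binary vectors u (with u_0 := 0) such that Σ_{i=1}^N |u_i - u_{i-1}| ≤ σ. Then the projection to the u-coordinates of the polytope {(u,z) ∈ [0,1]^N × ℝ^N : u_i - u_{i-1} ≤ z_i - z_{i-1} for i = 1,…,N, and 0 = z_0 ≤ z_1 ≤ … ≤ z_N ≤ σ/2} equals conv(U(σ)_N). -/

import Mathlib

open Set

/-- The previous value `u_{i-1}` with the convention `u_0 = 0`. -/
def prevVal {N : ℕ} (u : Fin N → ℝ) (i : Fin N) : ℝ :=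
  if h : (i : ℕ) = 0 then 0
  else u ⟨(i : ℕ) - 1, Nat.lt_of_le_of_lt (Nat.sub_le _ _) i.isLt⟩

namespace Stmt15

variable {N : ℕ}

/-- 1-based extension to ℕ with `pad z 0 = 0`. -/
def pad (z : Fin N → ℝ) (k : ℕ) : ℝ :=
  if h : 0 < k ∧ k - 1 < N then z ⟨k - 1, h.2⟩ else 0

lemma ext_zero (z : Fin N → ℝ) : pad z 0 = 0 := by simp [pad]

lemma ext_succ (z : Fin N → ℝ) (i : Fin N) : pad z ((i : ℕ) + 1) = z i := by
  have h : 0 < (i:ℕ)+1 ∧ (i:ℕ)+1-1 < N := ⟨Nat.succ_pos _, by simpa using i.isLt⟩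
  simp only [pad, dif_pos h]
  exact congrArg z (Fin.ext (by simp))

lemma ext_eq_prevVal (z : Fin N → ℝ) (i : Fin N) : pad z (i : ℕ) = prevVal z i := by
  unfold pad prevVal
  rcases Nat.eq_zero_or_pos (i : ℕ) with h | h
  · simp [h]
  · have h1 : (i:ℕ) ≠ 0 := h.ne'
    have h2 : (i:ℕ) - 1 < N := Nat.lt_of_le_of_lt (Nat.sub_le _ _) i.isLt
    simp [h1, h, h2]

lemma sum_pair (g : ℝ → ℝ → ℝ) (z : Fin N → ℝ) :
    ∑ i, g (z i) (prevVal z i) = ∑ m ∈ Finset.range N, g (pad z (m+1)) (pad z m) := by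
  rw [← Fin.sum_univ_eq_sum_range (fun m => g (pad z (m+1)) (pad z m)) N]
  exact Finset.sum_congr rfl fun i _ => by rw [ext_succ, ext_eq_prevVal]

lemma sum_tele (z : Fin N → ℝ) : ∑ i, (z i - prevVal z i) = pad z N := by
  rw [sum_pair (fun a b => a - b) z, Finset.sum_range_sub (pad z), ext_zero, sub_zero]

/-- the "ascent" functional. -/
noncomputable def tv (u : Fin N → ℝ) : ℝ := ∑ i, max (u i - prevVal u i) 0



/-- The projected polytope. -/
noncomputable def Q (N σ : ℕ) : Set (Fin N → ℝ) :=
  {u | (∀ i, u i ∈ Set.Icc (0:ℝ) 1) ∧ tv u ≤ (σ : ℝ) / 2}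

lemma proj_eq_Q (N σ : ℕ) :
    Prod.fst '' {p : (Fin N → ℝ) × (Fin N → ℝ) |
        (∀ i, p.1 i ∈ Set.Icc (0:ℝ) 1) ∧
        (∀ i, p.1 i - prevVal p.1 i ≤ p.2 i - prevVal p.2 i) ∧
        (∀ i, prevVal p.2 i ≤ p.2 i) ∧
        (∀ i, p.2 i ≤ (σ : ℝ) / 2)} = Q N σ := by
  apply Set.Subset.antisymm
  · rintro u ⟨⟨u', z⟩, ⟨hbox, hdz, hmono, hub⟩, rfl⟩
    refine ⟨hbox, ?_⟩
    have h1 : tv u' ≤ ∑ i, (z i - prevVal z i) := by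
      apply Finset.sum_le_sum
      intro i _
      exact max_le (hdz i) (sub_nonneg.2 (hmono i))
    rw [sum_tele] at h1
    refine h1.trans ?_
    rcases Nat.eq_zero_or_pos N with hN | hN
    · subst hN
      simp [pad]
      positivity
    · have h2 : 0 < N ∧ N - 1 < N := ⟨hN, Nat.sub_lt hN one_pos⟩
      rw [pad, dif_pos h2]
      exact hub _
  · rintro u ⟨hbox, htv⟩
    classical
    -- cumulative sums of positive parts
    set g : ℕ → ℝ := fun m => max (pad u (m+1) - pad u m) 0 with hg
    have hg0 : ∀ m, 0 ≤ g m := fun m => le_max_right _ _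
    set Z : ℕ → ℝ := fun k => ∑ m ∈ Finset.range k, g m with hZ
    have hZmono : Monotone Z := by
      intro a b hab
      exact Finset.sum_le_sum_of_subset_of_nonneg (Finset.range_subset_range.2 hab)
        (fun m _ _ => hg0 m)
    have hZN : Z N = tv u := by rw [hZ, tv, sum_pair (fun a b => max (a - b) 0) u]
    refine ⟨⟨u, fun i => Z ((i:ℕ)+1)⟩, ⟨hbox, ?_, ?_, ?_⟩, rfl⟩
    · intro i
      have hprev : prevVal (fun i : Fin N => Z ((i:ℕ)+1)) i = Z (i:ℕ) := by
        unfold prevVal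
        rcases Nat.eq_zero_or_pos (i:ℕ) with h | h
        · simp [h, hZ]
        · have h1 : (i:ℕ) ≠ 0 := h.ne'
          simp only [dif_neg h1]
          congr 1
          omega
      rw [hprev]
      have : Z ((i:ℕ)+1) - Z (i:ℕ) = g (i:ℕ) := by
        rw [hZ]; simp [Finset.sum_range_succ]
      rw [this, hg]
      simp only [ext_succ, ext_eq_prevVal]
      exact le_max_left _ _
    · intro i
      have hprev : prevVal (fun i : Fin N => Z ((i:ℕ)+1)) i = Z (i:ℕ) := by
        unfold prevVal
        rcases Nat.eq_zero_or_pos (i:ℕ) with h | h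
        · simp [h, hZ]
        · have h1 : (i:ℕ) ≠ 0 := h.ne'
          simp only [dif_neg h1]
          congr 1
          omega
      rw [hprev]
      exact hZmono (Nat.le_succ _)
    · intro i
      calc Z ((i:ℕ)+1) ≤ Z N := hZmono i.isLt
        _ = tv u := hZN
        _ ≤ (σ:ℝ)/2 := htv

end Stmt15

namespace S2
open Stmt15

variable {N : ℕ}

def IsIntR (x : ℝ) : Prop := ∃ n : ℤ, x = (n : ℝ)

lemma IsIntR.add {x y : ℝ} (hx : IsIntR x) (hy : IsIntR y) : IsIntR (x + y) := by
  obtain ⟨n, rfl⟩ := hx; obtain ⟨m, rfl⟩ := hy; exact ⟨n + m, by push_cast; ring⟩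

lemma isIntR_zero : IsIntR 0 := ⟨0, by norm_num⟩

lemma isIntR_sum {s : Finset (Fin N)} {f : Fin N → ℝ} (h : ∀ i ∈ s, IsIntR (f i)) :
    IsIntR (∑ i ∈ s, f i) :=
  Finset.sum_induction f IsIntR (fun _ _ => IsIntR.add) isIntR_zero h

lemma isIntR_term {a b : ℝ} (ha : a = 0 ∨ a = 1) (hb : b = 0 ∨ b = 1) :
    IsIntR (max (a - b) 0) := by
  rcases ha with rfl | rfl <;> rcases hb with rfl | rfl
  · exact ⟨0, by norm_num⟩
  · exact ⟨0, by norm_num⟩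
  · exact ⟨1, by norm_num⟩
  · exact ⟨0, by norm_num⟩

lemma prevVal_binary {u : Fin N → ℝ} (hb : ∀ i, u i = 0 ∨ u i = 1) (i : Fin N) :
    prevVal u i = 0 ∨ prevVal u i = 1 := by
  unfold prevVal
  split
  · exact Or.inl rfl
  · exact hb _

lemma tv_nonneg (u : Fin N → ℝ) : 0 ≤ tv u :=
  Finset.sum_nonneg fun i _ => le_max_right _ _

lemma abs_sum_eq (u : Fin N → ℝ) :
    ∑ i, |u i - prevVal u i| = 2 * tv u - pad u N := by
  have h1 : ∀ i : Fin N, |u i - prevVal u i|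
      = 2 * max (u i - prevVal u i) 0 - (u i - prevVal u i) := by
    intro i
    rcases le_or_gt (u i - prevVal u i) 0 with h | h
    · rw [abs_of_nonpos h, max_eq_right h]; ring
    · rw [abs_of_pos h, max_eq_left h.le]; ring
  calc ∑ i, |u i - prevVal u i|
      = ∑ i, (2 * max (u i - prevVal u i) 0 - (u i - prevVal u i)) :=
        Finset.sum_congr rfl fun i _ => h1 i
    _ = 2 * tv u - ∑ i, (u i - prevVal u i) := by
        rw [Finset.sum_sub_distrib, ← Finset.mul_sum]; rfl
    _ = 2 * tv u - pad u N := by rw [sum_tele]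

lemma ext_last_binary {u : Fin N → ℝ} (hb : ∀ i, u i = 0 ∨ u i = 1) :
    pad u N = 0 ∨ pad u N = 1 := by
  unfold pad
  split
  · exact hb _
  · exact Or.inl rfl

lemma binary_tv_iff {σ : ℕ} (hσ : Even σ) {u : Fin N → ℝ}
    (hb : ∀ i, u i = 0 ∨ u i = 1) :
    (∑ i, |u i - prevVal u i| ≤ (σ : ℝ)) ↔ tv u ≤ (σ : ℝ) / 2 := by
  obtain ⟨m, hm⟩ := hσ
  have habs := abs_sum_eq u
  have hlast := ext_last_binary hb
  have hσ2 : (σ : ℝ) / 2 = (m : ℝ) := by rw [hm]; push_cast; ring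
  constructor
  · intro h
    obtain ⟨n, hn⟩ : IsIntR (tv u) :=
      isIntR_sum fun i _ => isIntR_term (hb i) (prevVal_binary hb i)
    have h2 : 2 * tv u - pad u N ≤ (σ:ℝ) := habs ▸ h
    have h3 : (2 * n : ℝ) ≤ 2 * m + 1 := by
      rcases hlast with h4 | h4 <;> rw [hn, h4] at h2 <;>
        [skip; skip] <;> push_cast <;> nlinarith [h2, hm]
    have h5 : (2 * n : ℤ) ≤ 2 * m + 1 := by exact_mod_cast h3
    have h6 : n ≤ m := by omega
    rw [hn, hσ2]
    exact_mod_cast h6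
  · intro h
    rw [habs]
    have h0 : (0:ℝ) ≤ pad u N := by rcases hlast with h4 | h4 <;> rw [h4] <;> norm_num
    nlinarith [h, h0]

end S2

namespace S3
open Stmt15 S2 Filter Topology

variable {N : ℕ}

lemma prevVal_comb (x y : Fin N → ℝ) (a b : ℝ) (i : Fin N) :
    prevVal (fun k => a * x k + b * y k) i = a * prevVal x i + b * prevVal y i := by
  unfold prevVal
  split
  · ring
  · rfl

lemma convex_Q (N σ : ℕ) : Convex ℝ (Q N σ) := by
  rintro x ⟨hx1, hx2⟩ y ⟨hy1, hy2⟩ a b ha hb hab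
  have hxy : (a • x + b • y) = fun k => a * x k + b * y k := rfl
  constructor
  · intro i
    have h1 := (hx1 i).1; have h2 := (hx1 i).2
    have h3 := (hy1 i).1; have h4 := (hy1 i).2
    constructor
    · simp only [hxy]; nlinarith
    · simp only [hxy]; nlinarith
  · have key : tv (a • x + b • y) ≤ a * tv x + b * tv y := by
      rw [hxy, tv, tv, tv, Finset.mul_sum, Finset.mul_sum, ← Finset.sum_add_distrib]
      apply Finset.sum_le_sum
      intro i _
      rw [prevVal_comb]
      apply max_le
      · have e1 : a * x i + b * y i - (a * prevVal x i + b * prevVal y i)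
            = a * (x i - prevVal x i) + b * (y i - prevVal y i) := by ring
        rw [e1]
        have := le_max_left (x i - prevVal x i) 0
        have := le_max_left (y i - prevVal y i) 0
        nlinarith [le_max_left (x i - prevVal x i) 0, le_max_left (y i - prevVal y i) 0]
      · have := le_max_right (x i - prevVal x i) 0
        have := le_max_right (y i - prevVal y i) 0
        nlinarith
    calc tv (a • x + b • y) ≤ a * tv x + b * tv y := key
      _ ≤ a * ((σ:ℝ)/2) + b * ((σ:ℝ)/2) := by nlinarith
      _ = (σ:ℝ)/2 := by rw [← add_mul, hab, one_mul]

lemma continuous_tv : Continuous (tv (N := N)) := by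
  unfold tv
  apply continuous_finset_sum
  intro i _
  apply Continuous.max _ continuous_const
  apply Continuous.sub (continuous_apply i)
  unfold prevVal
  split
  · exact continuous_const
  · exact continuous_apply _

lemma isClosed_Q (N σ : ℕ) : IsClosed (Q N σ) := by
  have h1 : Q N σ = (⋂ i, {u : Fin N → ℝ | u i ∈ Set.Icc (0:ℝ) 1}) ∩ {u | tv u ≤ (σ:ℝ)/2} := by
    ext u; simp [Q, Set.mem_iInter, forall_and]
  rw [h1]
  apply IsClosed.inter
  · exact isClosed_iInter fun i => IsClosed.preimage (continuous_apply i) isClosed_Icc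
  · exact isClosed_le continuous_tv continuous_const

lemma isCompact_Q (N σ : ℕ) : IsCompact (Q N σ) := by
  have hsub : Q N σ ⊆ Set.univ.pi (fun _ : Fin N => Set.Icc (0:ℝ) 1) := by
    intro u hu
    intro i _
    exact hu.1 i
  exact IsCompact.of_isClosed_subset
    (isCompact_univ_pi fun _ => isCompact_Icc) (isClosed_Q N σ) hsub

end S3

namespace S4
open Stmt15 S2 S3 Filter Topology

variable {N : ℕ}

noncomputable def slope (u d : Fin N → ℝ) : ℝ :=
  ∑ i, (if 0 < u i - prevVal u i then d i - prevVal d i else 0)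

lemma prevVal_add_smul (u d : Fin N → ℝ) (ε : ℝ) (i : Fin N) :
    prevVal (u + ε • d) i = prevVal u i + ε * prevVal d i := by
  unfold prevVal
  split
  · ring
  · simp [Pi.add_apply, Pi.smul_apply, smul_eq_mul]

lemma tv_perturb (u d : Fin N → ℝ)
    (hd : ∀ i, u i - prevVal u i = 0 → d i - prevVal d i = 0) :
    ∀ᶠ ε in 𝓝 (0:ℝ), tv (u + ε • d) = tv u + ε * slope u d := by
  have key : ∀ᶠ ε in 𝓝 (0:ℝ), ∀ i : Fin N,
      max ((u i - prevVal u i) + ε * (d i - prevVal d i)) 0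
        = max (u i - prevVal u i) 0
          + ε * (if 0 < u i - prevVal u i then d i - prevVal d i else 0) := by
    rw [eventually_all]
    intro i
    set a := u i - prevVal u i with ha
    set c := d i - prevVal d i with hc
    rcases lt_trichotomy a 0 with h | h | h
    · have htend : Tendsto (fun ε : ℝ => a + ε * c) (𝓝 0) (𝓝 a) := by
        have : Tendsto (fun ε : ℝ => a + ε * c) (𝓝 0) (𝓝 (a + 0 * c)) := by
          exact (tendsto_const_nhds.add ((tendsto_id).mul tendsto_const_nhds))
        simpa using this
      filter_upwards [htend.eventually (eventually_lt_nhds h)] with ε hε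
      rw [max_eq_right hε.le, max_eq_right h.le, if_neg (not_lt.2 h.le), mul_zero, add_zero]
    · have hc0 : c = 0 := hd i h
      filter_upwards with ε
      rw [h, hc0, if_neg (lt_irrefl 0)]
      simp
    · have htend : Tendsto (fun ε : ℝ => a + ε * c) (𝓝 0) (𝓝 a) := by
        have : Tendsto (fun ε : ℝ => a + ε * c) (𝓝 0) (𝓝 (a + 0 * c)) := by
          exact (tendsto_const_nhds.add ((tendsto_id).mul tendsto_const_nhds))
        simpa using this
      filter_upwards [htend.eventually (eventually_gt_nhds h)] with ε hε
      rw [max_eq_left hε.le, max_eq_left h.le, if_pos h]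
  filter_upwards [key] with ε hε
  have h1 : tv (u + ε • d)
      = ∑ i, max ((u i - prevVal u i) + ε * (d i - prevVal d i)) 0 := by
    unfold tv
    apply Finset.sum_congr rfl
    intro i _
    rw [prevVal_add_smul]
    congr 1
    simp only [Pi.add_apply, Pi.smul_apply, smul_eq_mul]
    ring
  rw [h1]
  calc ∑ i, max ((u i - prevVal u i) + ε * (d i - prevVal d i)) 0
      = ∑ i, (max (u i - prevVal u i) 0
          + ε * (if 0 < u i - prevVal u i then d i - prevVal d i else 0)) :=
        Finset.sum_congr rfl fun i _ => hε i
    _ = tv u + ε * slope u d := by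
        rw [Finset.sum_add_distrib, ← Finset.mul_sum]; rfl

lemma not_extremePoint (σ : ℕ) (u d : Fin N → ℝ)
    (hd : ∀ i, u i - prevVal u i = 0 → d i - prevVal d i = 0)
    (hbox : ∀ i, d i ≠ 0 → 0 < u i ∧ u i < 1)
    (hL : tv u < (σ:ℝ)/2 ∨ slope u d = 0)
    (hdne : d ≠ 0) :
    u ∉ Set.extremePoints ℝ (Q N σ) := by
  intro hext
  obtain ⟨huQ, hseg⟩ := hext
  -- eventual membership of u + ε • d in Q
  have Ebox : ∀ᶠ ε in 𝓝 (0:ℝ), ∀ i : Fin N, (u + ε • d) i ∈ Set.Icc (0:ℝ) 1 := by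
    rw [eventually_all]
    intro i
    by_cases hdi : d i = 0
    · filter_upwards with ε
      simp only [Pi.add_apply, Pi.smul_apply, smul_eq_mul, hdi, mul_zero, add_zero]
      exact huQ.1 i
    · obtain ⟨h0, h1⟩ := hbox i hdi
      have htend : Tendsto (fun ε : ℝ => u i + ε * d i) (𝓝 0) (𝓝 (u i)) := by
        have : Tendsto (fun ε : ℝ => u i + ε * d i) (𝓝 0) (𝓝 (u i + 0 * d i)) :=
          tendsto_const_nhds.add ((tendsto_id).mul tendsto_const_nhds)
        simpa using this
      filter_upwards [htend.eventually (eventually_gt_nhds h0),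
        htend.eventually (eventually_lt_nhds h1)] with ε hε1 hε2
      exact ⟨le_of_lt hε1, le_of_lt hε2⟩
  have Etv : ∀ᶠ ε in 𝓝 (0:ℝ), tv (u + ε • d) ≤ (σ:ℝ)/2 := by
    rcases hL with hlt | hz
    · have htend : Tendsto (fun ε : ℝ => tv u + ε * slope u d) (𝓝 0) (𝓝 (tv u)) := by
        have : Tendsto (fun ε : ℝ => tv u + ε * slope u d) (𝓝 0)
            (𝓝 (tv u + 0 * slope u d)) :=
          tendsto_const_nhds.add ((tendsto_id).mul tendsto_const_nhds)
        simpa using this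
      filter_upwards [tv_perturb u d hd, htend.eventually (eventually_lt_nhds hlt)]
        with ε h1 h2
      rw [h1]; exact h2.le
    · filter_upwards [tv_perturb u d hd] with ε h1
      rw [h1, hz, mul_zero, add_zero]; exact huQ.2
  have Emem : ∀ᶠ ε in 𝓝 (0:ℝ), (u + ε • d) ∈ Q N σ := by
    filter_upwards [Ebox, Etv] with ε h1 h2
    exact ⟨h1, h2⟩
  have hneg : Tendsto (fun ε : ℝ => -ε) (𝓝 0) (𝓝 (0:ℝ)) := by
    simpa using (continuous_neg.tendsto (0:ℝ))
  have Eneg : ∀ᶠ ε in 𝓝 (0:ℝ), (u + (-ε) • d) ∈ Q N σ := hneg.eventually Emem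
  have Eboth : ∀ᶠ ε in 𝓝[>] (0:ℝ), (u + ε • d) ∈ Q N σ ∧ (u + (-ε) • d) ∈ Q N σ :=
    nhdsWithin_le_nhds (Emem.and Eneg)
  obtain ⟨ε, ⟨hQp, hQm⟩, hεpos⟩ := (Eboth.and self_mem_nhdsWithin).exists
  have hop : u ∈ openSegment ℝ (u + (-ε) • d) (u + ε • d) := by
    refine ⟨1/2, 1/2, by norm_num, by norm_num, by norm_num, ?_⟩
    funext i
    simp only [Pi.add_apply, Pi.smul_apply, smul_eq_mul]
    ring
  have h2 : u + (-ε) • d = u := (hseg hQm hQp hop)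
  have hd0 : (-ε) • d = 0 := by
    have := congrArg (fun v => v - u) h2
    simpa [add_sub_cancel_left] using this
  have : d = 0 := by
    rcases smul_eq_zero.1 hd0 with h | h
    · exact absurd h (neg_ne_zero.2 (ne_of_gt hεpos))
    · exact h
  exact hdne this

end S4

namespace S5
open Stmt15 S2 S3 S4

variable {N : ℕ}

/-- `i` is in the same constant block as `x`. -/
def blk (u : Fin N → ℝ) (x i : Fin N) : Prop :=
  ∀ k : Fin N, min (x:ℕ) (i:ℕ) ≤ (k:ℕ) → (k:ℕ) ≤ max (x:ℕ) (i:ℕ) → u k = u x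

lemma blk_self (u : Fin N → ℝ) (x : Fin N) : blk u x x := by
  intro k hk1 hk2
  have hk : k = x := Fin.ext (by omega)
  rw [hk]

lemma blk_val {u : Fin N → ℝ} {x i : Fin N} (h : blk u x i) : u i = u x :=
  h i (by omega) (by omega)

lemma blk_symm {u : Fin N → ℝ} {x i : Fin N} (h : blk u x i) : blk u i x := by
  intro k hk1 hk2
  rw [blk_val h]
  exact h k (by omega) (by omega)

lemma blk_step (u : Fin N → ℝ) (x : Fin N) {i : Fin N} (hi : (i:ℕ) ≠ 0)
    (heq : u i = u ⟨(i:ℕ)-1, Nat.lt_of_le_of_lt (Nat.sub_le _ _) i.isLt⟩) :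
    (blk u x i ↔ blk u x ⟨(i:ℕ)-1, Nat.lt_of_le_of_lt (Nat.sub_le _ _) i.isLt⟩) := by
  set p : Fin N := ⟨(i:ℕ)-1, Nat.lt_of_le_of_lt (Nat.sub_le _ _) i.isLt⟩ with hp
  have hpv : (p:ℕ) = (i:ℕ) - 1 := rfl
  constructor
  · intro h k hk1 hk2
    by_cases hk : (k:ℕ) = (i:ℕ) - 1
    · have hkp : k = p := Fin.ext (by omega)
      rw [hkp, ← heq]
      exact h i (by omega) (by omega)
    · exact h k (by omega) (by omega)
  · intro h k hk1 hk2
    by_cases hk : (k:ℕ) = (i:ℕ)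
    · have hki : k = i := Fin.ext hk
      rw [hki, heq]
      exact h p (by omega) (by omega)
    · exact h k (by omega) (by omega)

end S5

namespace S6
open Stmt15 S2 S3 S4 S5
open scoped Classical

variable {N : ℕ}

lemma not_int_frac {α A : ℝ} {m : ℕ} (hA : IsIntR A) (h : A + α = (m:ℝ))
    (h0 : 0 < α) (h1 : α < 1) : False := by
  obtain ⟨n, rfl⟩ := hA
  have hα : α = (((m:ℤ) - n : ℤ) : ℝ) := by push_cast; linarith
  rw [hα] at h0 h1
  have h0' : (0:ℤ) < (m:ℤ) - n := by exact_mod_cast h0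
  have h1' : ((m:ℤ) - n : ℤ) < 1 := by exact_mod_cast h1
  omega

lemma no_single_block (σ : ℕ) (hσ : Even σ) (u : Fin N → ℝ) (j : Fin N)
    (hbox : ∀ i, u i ∈ Set.Icc (0:ℝ) 1)
    (hj0 : u j ≠ 0) (hj1 : u j ≠ 1)
    (hall : ∀ x : Fin N, u x ≠ 0 → u x ≠ 1 → blk u j x)
    (hsj : slope u (fun i => if blk u j i then (1:ℝ) else 0) ≠ 0)
    (htv : tv u = (σ:ℝ)/2) : False := by
  classical
  obtain ⟨m, hm⟩ := hσ
  have hσ2 : (σ:ℝ)/2 = (m:ℝ) := by rw [hm]; push_cast; ring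
  have hα0 : 0 < u j := lt_of_le_of_ne (hbox j).1 (Ne.symm hj0)
  have hα1 : u j < 1 := lt_of_le_of_ne (hbox j).2 hj1
  set D : Fin N → ℝ := fun i => if blk u j i then (1:ℝ) else 0 with hD
  set S : Finset (Fin N) := Finset.univ.filter (fun i => blk u j i) with hS
  have hmemS : ∀ i : Fin N, i ∈ S ↔ blk u j i := by
    intro i; simp [hS]
  have hjS : j ∈ S := (hmemS j).2 (blk_self u j)
  have hSne : S.Nonempty := ⟨j, hjS⟩
  set b : Fin N := S.min' hSne with hb
  set e : Fin N := S.max' hSne with he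
  have hbS : blk u j b := (hmemS b).1 (S.min'_mem hSne)
  have heS : blk u j e := (hmemS e).1 (S.max'_mem hSne)
  have hbj : (b:ℕ) ≤ (j:ℕ) := Fin.le_def.1 (S.min'_le j hjS)
  have hje : (j:ℕ) ≤ (e:ℕ) := Fin.le_def.1 (S.le_max' j hjS)
  -- values on the interval
  have hval : ∀ k : Fin N, (b:ℕ) ≤ (k:ℕ) → (k:ℕ) ≤ (e:ℕ) → u k = u j := by
    intro k h1 h2
    rcases le_or_gt (k:ℕ) (j:ℕ) with h3 | h3
    · exact hbS k (by omega) (by omega)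
    · exact heS k (by omega) (by omega)
  -- block membership is interval membership
  have hmem : ∀ i : Fin N, blk u j i ↔ ((b:ℕ) ≤ (i:ℕ) ∧ (i:ℕ) ≤ (e:ℕ)) := by
    intro i
    constructor
    · intro h
      exact ⟨Fin.le_def.1 (S.min'_le i ((hmemS i).2 h)),
        Fin.le_def.1 (S.le_max' i ((hmemS i).2 h))⟩
    · intro ⟨h1, h2⟩ k hk1 hk2
      exact hval k (by omega) (by omega)
  -- outside the block, values are binary
  have hbin : ∀ i : Fin N, ¬ blk u j i → (u i = 0 ∨ u i = 1) := by
    intro i h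
    by_contra hc
    push_neg at hc
    exact h (hall i hc.1 hc.2)
  -- inside the block, increments vanish
  have hΔin : ∀ i : Fin N, (b:ℕ) < (i:ℕ) → (i:ℕ) ≤ (e:ℕ) → u i - prevVal u i = 0 := by
    intro i h1 h2
    have hi0 : (i:ℕ) ≠ 0 := by omega
    have hpv : prevVal u i = u ⟨(i:ℕ)-1, Nat.lt_of_le_of_lt (Nat.sub_le _ _) i.isLt⟩ := by
      unfold prevVal; rw [dif_neg hi0]
    rw [hpv, hval i (by omega) h2,
      hval ⟨(i:ℕ)-1, Nat.lt_of_le_of_lt (Nat.sub_le _ _) i.isLt⟩ (by simp; omega) (by simp; omega)]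
    ring
  -- prev index outside S as well, for i outside with i ≠ e+1
  have hprevout : ∀ i : Fin N, ¬ blk u j i → (i:ℕ) ≠ (e:ℕ)+1 → (i:ℕ) ≠ 0 →
      ¬ blk u j ⟨(i:ℕ)-1, Nat.lt_of_le_of_lt (Nat.sub_le _ _) i.isLt⟩ := by
    intro i h1 h2 h3 hc
    rw [hmem] at hc h1
    simp only at hc
    omega
  -- the summand of `slope`
  set c : Fin N → ℝ := fun i => if 0 < u i - prevVal u i then D i - prevVal D i else 0 with hc
  have hslope : slope u D = ∑ i, c i := rfl
  -- c vanishes away from b and e+1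
  have hczero : ∀ i : Fin N, i ≠ b → (i:ℕ) ≠ (e:ℕ)+1 → c i = 0 := by
    intro i h1 h2
    by_cases hiS : blk u j i
    · have hbi : (b:ℕ) < (i:ℕ) := by
        have := (hmem i).1 hiS
        have hne : (i:ℕ) ≠ (b:ℕ) := fun hcc => h1 (Fin.ext hcc)
        omega
      have := hΔin i hbi ((hmem i).1 hiS).2
      simp only [hc, this]
      norm_num
    · have hDi : D i = 0 := by simp only [hD, if_neg hiS]
      by_cases hi0 : (i:ℕ) = 0
      · have : prevVal D i = 0 := by unfold prevVal; rw [dif_pos hi0]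
        simp only [hc, hDi, this]
        norm_num
      · have hpout := hprevout i hiS h2 hi0
        have : prevVal D i = 0 := by
          unfold prevVal; rw [dif_neg hi0]
          simp only [hD, if_neg hpout]
        simp only [hc, hDi, this]
        norm_num
  -- value of c at b
  have hcb : c b = if 0 < u b - prevVal u b then 1 else 0 := by
    have hDb : D b = 1 := by simp only [hD, if_pos hbS]
    have hpDb : prevVal D b = 0 := by
      unfold prevVal
      by_cases hb0 : (b:ℕ) = 0
      · rw [dif_pos hb0]
      · rw [dif_neg hb0]
        have : ¬ blk u j ⟨(b:ℕ)-1, Nat.lt_of_le_of_lt (Nat.sub_le _ _) b.isLt⟩ := by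
          intro hcc
          rw [hmem] at hcc
          simp only at hcc
          omega
        simp only [hD, if_neg this]
    simp only [hc, hDb, hpDb]
    norm_num
  -- the summand of tv
  set t : Fin N → ℝ := fun i => max (u i - prevVal u i) 0 with ht
  have htvsum : tv u = ∑ i, t i := rfl
  -- t is integral away from b and e+1
  have htint : ∀ i : Fin N, i ≠ b → (i:ℕ) ≠ (e:ℕ)+1 → IsIntR (t i) := by
    intro i h1 h2
    by_cases hiS : blk u j i
    · have hbi : (b:ℕ) < (i:ℕ) := by
        have := (hmem i).1 hiS
        have hne : (i:ℕ) ≠ (b:ℕ) := fun hcc => h1 (Fin.ext hcc)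
        omega
      have := hΔin i hbi ((hmem i).1 hiS).2
      simp only [ht, this]
      exact ⟨0, by norm_num⟩
    · have hui := hbin i hiS
      have hpv : prevVal u i = 0 ∨ prevVal u i = 1 := by
        unfold prevVal
        by_cases hi0 : (i:ℕ) = 0
        · rw [dif_pos hi0]; exact Or.inl rfl
        · rw [dif_neg hi0]
          exact hbin _ (hprevout i hiS h2 hi0)
      exact isIntR_term hui hpv
  -- prevVal u b is binary
  have hlbin : prevVal u b = 0 ∨ prevVal u b = 1 := by
    unfold prevVal
    by_cases hb0 : (b:ℕ) = 0
    · rw [dif_pos hb0]; exact Or.inl rfl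
    · rw [dif_neg hb0]
      apply hbin
      intro hcc
      rw [hmem] at hcc
      simp only at hcc
      omega
  have hub : u b = u j := hval b le_rfl (by omega)
  by_cases hex : (e:ℕ)+1 < N
  · -- exit edge exists
    set ex : Fin N := ⟨(e:ℕ)+1, hex⟩ with hexdef
    have hexnS : ¬ blk u j ex := by
      intro hcc; rw [hmem] at hcc; simp only [hexdef] at hcc; omega
    have hexb : ex ≠ b := by
      intro hcc
      have : ((ex:ℕ) : ℕ) = (b:ℕ) := congrArg Fin.val hcc
      simp only [hexdef] at this
      omega
    have hrbin : u ex = 0 ∨ u ex = 1 := hbin ex hexnS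
    have hpex : prevVal u ex = u j := by
      unfold prevVal
      rw [dif_neg (by simp [hexdef] : ¬ ((ex:ℕ) = 0))]
      apply hval <;> simp [hexdef] <;> omega
    have hcex : c ex = if 0 < u ex - u j then -1 else 0 := by
      have hDex : D ex = 0 := by simp only [hD, if_neg hexnS]
      have hpDex : prevVal D ex = 1 := by
        unfold prevVal
        rw [dif_neg (by simp [hexdef] : ¬ ((ex:ℕ) = 0))]
        have hpe : (⟨(ex:ℕ)-1, Nat.lt_of_le_of_lt (Nat.sub_le _ _) ex.isLt⟩ : Fin N) = e :=
          Fin.ext (by simp [hexdef])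
        rw [hpe]
        simp only [hD, if_pos heS]
      simp only [hc, hDex, hpDex, hpex]
      norm_num
    -- split the slope sum
    have hslope2 : slope u D = c b + c ex := by
      rw [hslope, ← Finset.add_sum_erase _ c (Finset.mem_univ b),
        ← Finset.add_sum_erase _ c (Finset.mem_erase.2 ⟨hexb, Finset.mem_univ ex⟩)]
      have hrest : ∑ i ∈ (Finset.univ.erase b).erase ex, c i = 0 := by
        apply Finset.sum_eq_zero
        intro i hi
        obtain ⟨hine, hib⟩ := Finset.mem_erase.1 hi
        obtain ⟨hib2, _⟩ := Finset.mem_erase.1 hib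
        exact hczero i hib2 (fun hcc => hine (Fin.ext (by simp [hexdef, hcc])))
      rw [hrest, add_zero]
    -- split the tv sum
    have htv2 : tv u = t b + t ex + ∑ i ∈ (Finset.univ.erase b).erase ex, t i := by
      rw [htvsum, ← Finset.add_sum_erase _ t (Finset.mem_univ b),
        ← Finset.add_sum_erase _ t (Finset.mem_erase.2 ⟨hexb, Finset.mem_univ ex⟩)]
      ring
    have hAint : IsIntR (∑ i ∈ (Finset.univ.erase b).erase ex, t i) := by
      apply isIntR_sum
      intro i hi
      obtain ⟨hine, hib⟩ := Finset.mem_erase.1 hi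
      obtain ⟨hib2, _⟩ := Finset.mem_erase.1 hib
      exact htint i hib2 (fun hcc => hine (Fin.ext (by simp [hexdef, hcc])))
    have htb : t b = max (u j - prevVal u b) 0 := by simp only [ht, hub]
    have htex : t ex = max (u ex - u j) 0 := by simp only [ht, hpex]
    have hcb2 : c b = if 0 < u j - prevVal u b then 1 else 0 := by rw [hcb, hub]
    rcases hlbin with hl | hl <;> rcases hrbin with hr | hr
    · -- l=0, r=0 : tv = A + α
      have h1 : t b = u j := by
        rw [htb, hl, sub_zero]; exact max_eq_left hα0.le
      have h2 : t ex = 0 := by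
        rw [htex, hr]; exact max_eq_right (by linarith)
      exact not_int_frac (m := m) hAint (by linarith [htv, htv2, h1, h2, hσ2]) hα0 hα1
    · -- l=0, r=1 : slope = 0, contradiction
      apply hsj
      rw [hslope2, hcb2, hcex, hl, hr]
      rw [if_pos (by linarith : (0:ℝ) < u j - 0), if_pos (by linarith : (0:ℝ) < 1 - u j)]
      ring
    · -- l=1, r=0 : slope = 0
      apply hsj
      rw [hslope2, hcb2, hcex, hl, hr]
      rw [if_neg (by push_neg; linarith : ¬ (0:ℝ) < u j - 1),
        if_neg (by push_neg; linarith : ¬ (0:ℝ) < 0 - u j)]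
      ring
    · -- l=1, r=1 : tv = A + (1-α)
      have h1 : t b = 0 := by
        rw [htb, hl]; exact max_eq_right (by linarith)
      have h2 : t ex = 1 - u j := by
        rw [htex, hr]; exact max_eq_left (by linarith)
      exact not_int_frac (m := m) hAint (α := 1 - u j)
        (by linarith [htv, htv2, h1, h2, hσ2]) (by linarith) (by linarith)
  · -- no exit edge
    have hNe : N = (e:ℕ)+1 := by have := e.isLt; omega
    have hslope2 : slope u D = c b := by
      rw [hslope, ← Finset.add_sum_erase _ c (Finset.mem_univ b)]
      have hrest : ∑ i ∈ Finset.univ.erase b, c i = 0 := by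
        apply Finset.sum_eq_zero
        intro i hi
        obtain ⟨hib, _⟩ := Finset.mem_erase.1 hi
        exact hczero i hib (by have := i.isLt; omega)
      rw [hrest, add_zero]
    have htv2 : tv u = t b + ∑ i ∈ Finset.univ.erase b, t i := by
      rw [htvsum, ← Finset.add_sum_erase _ t (Finset.mem_univ b)]
    have hAint : IsIntR (∑ i ∈ Finset.univ.erase b, t i) := by
      apply isIntR_sum
      intro i hi
      obtain ⟨hib, _⟩ := Finset.mem_erase.1 hi
      exact htint i hib (by have := i.isLt; omega)
    have htb : t b = max (u j - prevVal u b) 0 := by simp only [ht, hub]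
    have hcb2 : c b = if 0 < u j - prevVal u b then 1 else 0 := by rw [hcb, hub]
    rcases hlbin with hl | hl
    · -- l=0 : tv = A + α
      have h1 : t b = u j := by
        rw [htb, hl, sub_zero]; exact max_eq_left hα0.le
      exact not_int_frac (m := m) hAint (by linarith [htv, htv2, h1, hσ2]) hα0 hα1
    · -- l=1 : slope = 0
      apply hsj
      rw [hslope2, hcb2, hl]
      rw [if_neg (by push_neg; linarith : ¬ (0:ℝ) < u j - 1)]

end S6

namespace S7
open Stmt15 S2 S3 S4 S5 S6
open scoped Classical

variable {N : ℕ}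

lemma slope_comb (u d1 d2 : Fin N → ℝ) (c1 c2 : ℝ) :
    S4.slope u (fun i => c1 * d1 i + c2 * d2 i) = c1 * S4.slope u d1 + c2 * S4.slope u d2 := by
  unfold S4.slope
  rw [Finset.mul_sum, Finset.mul_sum, ← Finset.sum_add_distrib]
  apply Finset.sum_congr rfl
  intro i _
  rw [prevVal_comb]
  by_cases h : 0 < u i - prevVal u i
  · rw [if_pos h, if_pos h, if_pos h]; ring
  · rw [if_neg h, if_neg h, if_neg h]; ring

lemma extremePoints_binary (σ : ℕ) (hσ : Even σ) (u : Fin N → ℝ)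
    (hext : u ∈ Set.extremePoints ℝ (Q N σ)) : ∀ i, u i = 0 ∨ u i = 1 := by
  by_contra hfr
  push_neg at hfr
  obtain ⟨j, hj0, hj1⟩ := hfr
  have huQ := hext.1
  have hbox := huQ.1
  have hfrin : ∀ x : Fin N, u x ≠ 0 → u x ≠ 1 → 0 < u x ∧ u x < 1 := fun x hx0 hx1 =>
    ⟨lt_of_le_of_ne (hbox x).1 (Ne.symm hx0), lt_of_le_of_ne (hbox x).2 hx1⟩
  set dB : Fin N → Fin N → ℝ := fun x i => if blk u x i then (1:ℝ) else 0 with hdB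
  -- the direction compatibility condition
  have hdagger : ∀ x : Fin N, u x ≠ 0 → ∀ i, u i - prevVal u i = 0 →
      dB x i - prevVal (dB x) i = 0 := by
    intro x hx0 i hΔ
    by_cases hi0 : (i:ℕ) = 0
    · have hp : prevVal (dB x) i = 0 := by unfold prevVal; rw [dif_pos hi0]
      have hui : u i = 0 := by
        have : prevVal u i = 0 := by unfold prevVal; rw [dif_pos hi0]
        rw [this] at hΔ; linarith
      have hnb : ¬ blk u x i := by
        intro hcc
        exact hx0 (by rw [← blk_val hcc, hui])
      rw [hp, hdB]
      simp only [if_neg hnb]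
      ring
    · have hp : prevVal (dB x) i
          = dB x ⟨(i:ℕ)-1, Nat.lt_of_le_of_lt (Nat.sub_le _ _) i.isLt⟩ := by
        unfold prevVal; rw [dif_neg hi0]
      have hpu : prevVal u i
          = u ⟨(i:ℕ)-1, Nat.lt_of_le_of_lt (Nat.sub_le _ _) i.isLt⟩ := by
        unfold prevVal; rw [dif_neg hi0]
      have heq : u i = u ⟨(i:ℕ)-1, Nat.lt_of_le_of_lt (Nat.sub_le _ _) i.isLt⟩ := by
        rw [← hpu]; linarith
      have hstep := blk_step u x hi0 heq
      rw [hp, hdB]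
      simp only
      rw [if_congr hstep rfl rfl]
      ring
  -- box compatibility
  have hboxd : ∀ x : Fin N, u x ≠ 0 → u x ≠ 1 → ∀ i, dB x i ≠ 0 → 0 < u i ∧ u i < 1 := by
    intro x hx0 hx1 i hdi
    have hblk : blk u x i := by
      by_contra hcc
      apply hdi
      rw [hdB]; simp only [if_neg hcc]
    have := blk_val hblk
    rw [this]
    exact hfrin x hx0 hx1
  have hdne : ∀ x : Fin N, dB x ≠ 0 := by
    intro x hcc
    have := congrFun hcc x
    rw [hdB] at this
    simp only [if_pos (blk_self u x), Pi.zero_apply] at this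
    exact one_ne_zero this
  by_cases hlt : tv u < (σ:ℝ)/2
  · exact not_extremePoint σ u (dB j) (hdagger j hj0) (hboxd j hj0 hj1)
      (Or.inl hlt) (hdne j) hext
  have htv : tv u = (σ:ℝ)/2 := le_antisymm huQ.2 (not_lt.1 hlt)
  by_cases hz : ∃ x : Fin N, (u x ≠ 0 ∧ u x ≠ 1) ∧ S4.slope u (dB x) = 0
  · obtain ⟨x, ⟨hx0, hx1⟩, hsx⟩ := hz
    exact not_extremePoint σ u (dB x) (hdagger x hx0) (hboxd x hx0 hx1)
      (Or.inr hsx) (hdne x) hext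
  push_neg at hz
  by_cases hout : ∃ x : Fin N, (u x ≠ 0 ∧ u x ≠ 1) ∧ ¬ blk u j x
  · obtain ⟨x, ⟨hx0, hx1⟩, hnb⟩ := hout
    set d : Fin N → ℝ := fun i => S4.slope u (dB x) * dB j i + (- S4.slope u (dB j)) * dB x i
      with hd
    have hsd : S4.slope u d = 0 := by
      rw [hd, slope_comb u (dB j) (dB x) (S4.slope u (dB x)) (- S4.slope u (dB j))]
      ring
    have hdag : ∀ i, u i - prevVal u i = 0 → d i - prevVal d i = 0 := by
      intro i hΔ
      have h1 := hdagger j hj0 i hΔ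
      have h2 := hdagger x hx0 i hΔ
      have hp : prevVal d i
          = S4.slope u (dB x) * prevVal (dB j) i + (- S4.slope u (dB j)) * prevVal (dB x) i :=
        prevVal_comb (dB j) (dB x) _ _ i
      rw [hd, hp]
      simp only
      linear_combination S4.slope u (dB x) * h1 - S4.slope u (dB j) * h2
    have hbd : ∀ i, d i ≠ 0 → 0 < u i ∧ u i < 1 := by
      intro i hdi
      by_cases h1 : dB j i = 0
      · by_cases h2 : dB x i = 0
        · exfalso; apply hdi; rw [hd]; simp only [h1, h2]; ring
        · exact hboxd x hx0 hx1 i h2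
      · exact hboxd j hj0 hj1 i h1
    have hdnz : d ≠ 0 := by
      intro hcc
      have h1 := congrFun hcc j
      have hxj : ¬ blk u x j := fun hcc2 => hnb (blk_symm hcc2)
      rw [hd] at h1
      simp only [Pi.zero_apply, hdB, if_pos (blk_self u j), if_neg hxj] at h1
      have hsx := hz x ⟨hx0, hx1⟩
      apply hsx
      have : S4.slope u (fun i => if blk u x i then (1:ℝ) else 0) * 1 = 0 := by linarith
      linarith
    exact not_extremePoint σ u d hdag hbd (Or.inr hsd) hdnz hext
  · push_neg at hout
    exact no_single_block σ hσ u j hbox hj0 hj1 (fun x hx0 hx1 => hout x ⟨hx0, hx1⟩)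
      (hz j ⟨hj0, hj1⟩) htv

end S7

namespace S8
open Stmt15 S2 S3 S4 S5 S6 S7

theorem stmt15' (N σ : ℕ) (hσ : Even σ) :
    Prod.fst '' {p : (Fin N → ℝ) × (Fin N → ℝ) |
        (∀ i, p.1 i ∈ Set.Icc (0:ℝ) 1) ∧
        (∀ i, p.1 i - prevVal p.1 i ≤ p.2 i - prevVal p.2 i) ∧
        (∀ i, prevVal p.2 i ≤ p.2 i) ∧
        (∀ i, p.2 i ≤ (σ : ℝ) / 2)} =
      convexHull ℝ {u : Fin N → ℝ |
        (∀ i, u i = 0 ∨ u i = 1) ∧ ∑ i, |u i - prevVal u i| ≤ (σ : ℝ)} := by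
  rw [proj_eq_Q]
  set S : Set (Fin N → ℝ) := {u : Fin N → ℝ |
    (∀ i, u i = 0 ∨ u i = 1) ∧ ∑ i, |u i - prevVal u i| ≤ (σ : ℝ)} with hSdef
  have hSsub : S ⊆ Q N σ := by
    rintro u ⟨hb, htv⟩
    refine ⟨fun i => ?_, (binary_tv_iff hσ hb).1 htv⟩
    rcases hb i with h | h <;> rw [h] <;> constructor <;> norm_num
  apply Set.Subset.antisymm
  · -- Q ⊆ conv S
    have hKM := closure_convexHull_extremePoints (isCompact_Q N σ) (convex_Q N σ)
    have hES : Set.extremePoints ℝ (Q N σ) ⊆ S := by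
      intro u hu
      have hb := extremePoints_binary σ hσ u hu
      exact ⟨hb, (binary_tv_iff hσ hb).2 hu.1.2⟩
    have hfin : S.Finite := by
      apply Set.Finite.subset (Set.Finite.pi (fun _ : Fin N => (Set.finite_singleton (0:ℝ)).insert 1))
      intro u hu
      intro i _
      rcases hu.1 i with h | h <;> simp [h]
    have hclosed : IsClosed (convexHull ℝ S) := hfin.isClosed_convexHull (𝕜 := ℝ)
    calc Q N σ = closure (convexHull ℝ (Set.extremePoints ℝ (Q N σ))) := hKM.symm
      _ ⊆ closure (convexHull ℝ S) := closure_mono (convexHull_mono hES)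
      _ = convexHull ℝ S := hclosed.closure_eq
  · exact convexHull_min hSsub (convex_Q N σ)

end S8

/-- Finite-dimensional extended formulation for bounded variation: for even `σ`, the
projection to the `u`-coordinates of
`{(u,z) ∈ [0,1]^N × ℝ^N : u_i - u_{i-1} ≤ z_i - z_{i-1}, 0 = z_0 ≤ z_1 ≤ … ≤ z_N ≤ σ/2}`
equals the convex hull of the binary vectors `u` (with `u_0 = 0`) of discrete total
variation `∑ |u_i - u_{i-1}| ≤ σ`. -/
theorem stmt15 (N σ : ℕ) (hσ : Even σ) :
    Prod.fst '' {p : (Fin N → ℝ) × (Fin N → ℝ) |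
        (∀ i, p.1 i ∈ Set.Icc (0:ℝ) 1) ∧
        (∀ i, p.1 i - prevVal p.1 i ≤ p.2 i - prevVal p.2 i) ∧
        (∀ i, prevVal p.2 i ≤ p.2 i) ∧
        (∀ i, p.2 i ≤ (σ : ℝ) / 2)} =
      convexHull ℝ {u : Fin N → ℝ |
        (∀ i, u i = 0 ∨ u i = 1) ∧ ∑ i, |u i - prevVal u i| ≤ (σ : ℝ)} := by
  exact S8.stmt15' N σ hσ
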